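/- Let 0 < λ < 1, k ∈ ℕ, α/s ∈ ℝ and b_0, ..., b_k ∈ ℝ. Define u_n = (α/s)·(ln ln n)/(ln n) + Σ_{i=0}^{k} b_i (ln n)^{(i+1)λ-(i+1)}. Then for every j with 2 ≤ j ≤ k+1, u_n^j = Σ_{i=j}^{k+1} Σ_{p_1+⋯+p_j=i, p_m ≥ 1} b_{p_1-1}⋯b_{p_j-1} (ln n)^{(λ-1)i} + o((ln n)^{(λ-1)(k+1)}) as n → ∞, where b_{k+1} := 0. -/

import Mathlib

open Real Filter Asymptotics Finset

lemma auxRpowO {a c : ℝ} (h : a < c) :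
    (fun y : ℝ => y ^ a) =o[atTop] (fun y : ℝ => y ^ c) := by
  rw [isLittleO_iff_tendsto']
  · have := tendsto_rpow_neg_atTop (y := c - a) (by linarith)
    refine this.congr' ?_
    filter_upwards [eventually_gt_atTop (0:ℝ)] with y hy
    rw [← Real.rpow_sub hy] at *
    ring_nf
  · filter_upwards [eventually_gt_atTop (0:ℝ)] with y hy hzero
    exact absurd hzero (by positivity)

lemma auxMain (t : ℕ) (β c : ℝ) (h : β - t < c) :
    (fun y : ℝ => (Real.log y / y) ^ t * y ^ β) =o[atTop] (fun y : ℝ => y ^ c) := by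
  rcases Nat.eq_zero_or_pos t with ht | ht
  · subst ht
    simpa using auxRpowO (by simpa using h)
  · set ε : ℝ := (c - β + t) / t with hε
    have hεpos : 0 < ε := by
      have : (0:ℝ) < t := by exact_mod_cast ht
      apply div_pos (by linarith) this
    have h1 : (fun y : ℝ => (Real.log y) ^ t) =o[atTop] fun y : ℝ => (y ^ ε) ^ t :=
      (isLittleO_log_rpow_atTop hεpos).pow ht
    have h2 := h1.mul_isBigO (isBigO_refl (fun y : ℝ => y ^ (β - t)) atTop)
    refine h2.congr' ?_ ?_
    · filter_upwards [eventually_gt_atTop (0:ℝ)] with y hy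
      rw [div_pow, Real.rpow_sub hy, Real.rpow_natCast]
      field_simp
    · filter_upwards [eventually_gt_atTop (0:ℝ)] with y hy
      rw [← Real.rpow_natCast (y ^ ε) t, ← Real.rpow_mul hy.le, ← Real.rpow_add hy]
      congr 1
      have ht' : (t:ℝ) ≠ 0 := by exact_mod_cast ht.ne'
      rw [hε, div_mul_cancel₀ _ ht']; ring

lemma auxArith (lam : ℝ) (k j t f s : ℕ)
    (hlo : (k : ℝ) / (k + 1) < lam) (hl1 : lam < 1)
    (hj2 : 2 ≤ j) (hjk : j ≤ k + 1) (htf : t + f = j) (hfs : f ≤ s)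
    (hcase : 1 ≤ t ∨ k + 2 ≤ s) :
    (lam - 1) * s - t < (lam - 1) * (k + 1) := by
  have hk1 : (0:ℝ) < (k:ℝ) + 1 := by positivity
  have h1 : (1 - lam) * ((k:ℝ) + 1) < 1 := by
    rw [div_lt_iff₀ hk1] at hlo; nlinarith
  by_cases hs : k + 2 ≤ s
  · have hs' : (k:ℝ) + 2 ≤ (s:ℝ) := by exact_mod_cast hs
    have ht0 : (0:ℝ) ≤ (t:ℝ) := by positivity
    nlinarith [mul_nonneg (sub_nonneg.2 hl1.le) (sub_nonneg.2 hs')]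
  · push_neg at hs
    have ht1 : 1 ≤ t := by
      rcases hcase with h | h
      · exact h
      · omega
    have hsr : (s:ℝ) ≤ (k:ℝ) + 1 := by
      have : s ≤ k + 1 := by omega
      exact_mod_cast this
    have htr : (1:ℝ) ≤ (t:ℝ) := by exact_mod_cast ht1
    have hkey : (k:ℝ) + 1 - s ≤ (t:ℝ) * ((k:ℝ) + 1) := by
      have h2 : (k:ℝ) + 1 - s ≤ (k:ℝ) - 1 + t := by
        have : (j:ℝ) = (t:ℝ) + (f:ℝ) := by exact_mod_cast htf.symm
        have hfr : (f:ℝ) ≤ (s:ℝ) := by exact_mod_cast hfs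
        have hjr : (2:ℝ) ≤ (j:ℝ) := by exact_mod_cast hj2
        linarith
      nlinarith
    have hpos : (0:ℝ) ≤ (k:ℝ) + 1 - (s:ℝ) := by linarith
    nlinarith [mul_le_mul_of_nonneg_left h1.le hpos, mul_nonneg (sub_nonneg.2 hl1.le) hpos]

/-- Expansion of powers of the correction sequence
`u n = (α/s) log log n / log n + Σ_{i=0}^k b_i (log n)^{(i+1)λ-(i+1)}`:
for `2 ≤ j ≤ k+1`,
`u n ^ j = Σ_{i=j}^{k+1} Σ_{p_1+⋯+p_j=i, p_m ≥ 1} b_{p_1-1}⋯b_{p_j-1} (log n)^{(λ-1)i}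
  + o((log n)^{(λ-1)(k+1)})`, with `b_{k+1} = 0`. -/
theorem stmt6 (lam : ℝ) (k : ℕ)
    (hlo : (k : ℝ) / (k + 1) < lam) (hhi : lam ≤ ((k : ℝ) + 1) / (k + 2))
    (hl0 : 0 < lam) (hl1 : lam < 1)
    (αs : ℝ) (b : ℕ → ℝ) (hbk : b (k + 1) = 0)
    (u : ℕ → ℝ)
    (hu : ∀ n : ℕ, u n = αs * Real.log (Real.log n) / Real.log n
        + ∑ i ∈ Finset.range (k + 1),
            b i * (Real.log n) ^ (((i : ℝ) + 1) * lam - ((i : ℝ) + 1))) :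
    ∀ j : ℕ, 2 ≤ j → j ≤ k + 1 →
      (fun n : ℕ => (u n) ^ j
          - ∑ i ∈ Finset.Icc j (k + 1),
              (∑ p ∈ (Fintype.piFinset fun _ : Fin j => Finset.Icc 1 i).filter
                  (fun p => ∑ m, p m = i),
                ∏ m, b (p m - 1)) * (Real.log n) ^ ((lam - 1) * (i : ℝ)))
        =o[atTop] (fun n : ℕ => (Real.log n) ^ ((lam - 1) * ((k : ℝ) + 1))) := by
  intro j hj2 hjk
  have hlog : Tendsto (fun n : ℕ => Real.log n) atTop atTop :=
    Real.tendsto_log_atTop.comp tendsto_natCast_atTop_atTop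
  set e : ℕ → ℝ := fun n => αs * Real.log (Real.log n) / Real.log n with he
  set a : ℕ → ℕ → ℝ := fun p n =>
    if p = 0 then e n else b (p - 1) * (Real.log n) ^ ((lam - 1) * (p : ℝ)) with ha
  have hu' : ∀ n, u n = ∑ p ∈ Finset.range (k + 2), a p n := by
    intro n
    rw [hu n]
    conv_rhs => rw [Finset.sum_range_succ']
    have h0 : a 0 n = e n := by simp [ha]
    rw [h0, add_comm]
    congr 1
    refine Finset.sum_congr rfl fun i _ => ?_
    have hne : i + 1 ≠ 0 := Nat.succ_ne_zero i
    have : a (i + 1) n = b i * Real.log n ^ ((lam - 1) * ((i : ℕ) + 1 : ℕ)) := by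
      simp [ha]
    rw [this]
    congr 1
    push_cast
    ring
  set P : Finset (Fin j → ℕ) := Fintype.piFinset fun _ => Finset.range (k + 2) with hP
  set A : Finset (Fin j → ℕ) :=
    (Fintype.piFinset fun _ : Fin j => Finset.Icc 1 (k + 1)).filter
      (fun q => ∑ m, q m ≤ k + 1) with hA
  have hAP : A ⊆ P := by
    intro q hq
    simp only [hA, hP, Finset.mem_filter, Fintype.mem_piFinset, Finset.mem_Icc,
      Finset.mem_range] at *
    exact fun m => by have := hq.1 m; omega
  have hpow : ∀ n, u n ^ j = ∑ q ∈ P, ∏ m, a (q m) n := by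
    intro n
    rw [hu' n]
    calc (∑ p ∈ Finset.range (k + 2), a p n) ^ j
        = ∏ _m : Fin j, (∑ p ∈ Finset.range (k + 2), a p n) := by
          rw [Finset.prod_const, Finset.card_univ, Fintype.card_fin]
      _ = ∑ q ∈ P, ∏ m, a (q m) n := Finset.prod_univ_sum _ _
  have hbi : A = (Finset.Icc j (k + 1)).biUnion
      (fun i => (Fintype.piFinset fun _ : Fin j => Finset.Icc 1 i).filter
        fun p => ∑ m, p m = i) := by
    ext q
    simp only [hA, Finset.mem_filter, Fintype.mem_piFinset, Finset.mem_Icc,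
      Finset.mem_biUnion]
    constructor
    · rintro ⟨hmem, hsum⟩
      refine ⟨∑ m, q m, ⟨?_, hsum⟩, fun m => ⟨(hmem m).1, ?_⟩, rfl⟩
      · calc j = ∑ _m : Fin j, 1 := by simp
          _ ≤ ∑ m, q m := Finset.sum_le_sum fun m _ => (hmem m).1
      · exact Finset.single_le_sum (fun m _ => Nat.zero_le _) (Finset.mem_univ m)
    · rintro ⟨i, ⟨hji, hik⟩, hmem, hsum⟩
      exact ⟨fun m => ⟨(hmem m).1, le_trans (hmem m).2 hik⟩, hsum ▸ hik⟩
  have hdisj : (↑(Finset.Icc j (k + 1)) : Set ℕ).PairwiseDisjoint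
      (fun i => (Fintype.piFinset fun _ : Fin j => Finset.Icc 1 i).filter
        fun p => ∑ m, p m = i) := by
    intro i1 _ i2 _ hne
    simp only [Function.onFun, Finset.disjoint_left, Finset.mem_filter]
    rintro q ⟨_, h1⟩ ⟨_, h2⟩
    exact hne (h1 ▸ h2 ▸ rfl)
  have hmain : ∀ᶠ n in atTop,
      (u n) ^ j - (∑ i ∈ Finset.Icc j (k + 1),
          (∑ p ∈ (Fintype.piFinset fun _ : Fin j => Finset.Icc 1 i).filter
              (fun p => ∑ m, p m = i),
            ∏ m, b (p m - 1)) * (Real.log n) ^ ((lam - 1) * (i : ℝ)))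
        = ∑ q ∈ P \ A, ∏ m, a (q m) n := by
    filter_upwards [hlog.eventually_gt_atTop 0] with n hx
    rw [hpow n, Finset.sum_sdiff_eq_sub hAP]
    congr 1
    rw [hbi, Finset.sum_biUnion hdisj]
    refine Finset.sum_congr rfl fun i _ => ?_
    rw [Finset.sum_mul]
    refine Finset.sum_congr rfl fun p hp => ?_
    simp only [Finset.mem_filter, Fintype.mem_piFinset, Finset.mem_Icc] at hp
    obtain ⟨hmem, hsum⟩ := hp
    have hap : ∀ m, a (p m) n = b (p m - 1) * Real.log n ^ ((lam - 1) * (p m : ℝ)) := by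
      intro m
      have h1 : p m ≠ 0 := by have := (hmem m).1; omega
      simp [ha, h1]
    rw [Finset.prod_congr rfl (fun m _ => hap m), Finset.prod_mul_distrib]
    congr 1
    rw [← Real.rpow_sum_of_pos hx]
    congr 1
    rw [← Finset.mul_sum]
    congr 1
    rw [← Nat.cast_sum, hsum]
  have hterm : ∀ q ∈ P \ A, (fun n : ℕ => ∏ m, a (q m) n)
      =o[atTop] (fun n : ℕ => (Real.log n) ^ ((lam - 1) * ((k : ℝ) + 1))) := by
    intro q hq
    rw [Finset.mem_sdiff] at hq
    obtain ⟨hqP, hqA⟩ := hq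
    have hqP' : ∀ m, q m ≤ k + 1 := by
      intro m
      have := (Fintype.mem_piFinset.1 hqP) m
      rw [Finset.mem_range] at this; omega
    set t := (Finset.univ.filter fun m : Fin j => q m = 0).card with htdef
    set f := (Finset.univ.filter fun m : Fin j => ¬ q m = 0).card with hfdef
    set s := ∑ m, q m with hsdef
    have htf : t + f = j := by
      rw [htdef, hfdef, Finset.card_filter_add_card_filter_not,
        Finset.card_univ, Fintype.card_fin]
    have hfs : f ≤ s := by
      calc f = ∑ _m ∈ Finset.univ.filter fun m : Fin j => ¬ q m = 0, 1 := by
              rw [hfdef, Finset.card_eq_sum_ones]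
        _ ≤ ∑ m ∈ Finset.univ.filter fun m : Fin j => ¬ q m = 0, q m :=
              Finset.sum_le_sum fun m hm => by
                simp only [Finset.mem_filter] at hm; omega
        _ ≤ ∑ m, q m := Finset.sum_le_sum_of_subset (Finset.filter_subset _ _)
    have hcase : 1 ≤ t ∨ k + 2 ≤ s := by
      by_cases hz : ∃ m, q m = 0
      · left
        obtain ⟨m, hm⟩ := hz
        have : m ∈ Finset.univ.filter fun m : Fin j => q m = 0 :=
          Finset.mem_filter.2 ⟨Finset.mem_univ _, hm⟩
        exact Finset.card_pos.2 ⟨m, this⟩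
      · right
        push_neg at hz
        by_contra hcon
        push_neg at hcon
        apply hqA
        rw [hA, Finset.mem_filter]
        refine ⟨Fintype.mem_piFinset.2 fun m => Finset.mem_Icc.2 ⟨?_, hqP' m⟩, by omega⟩
        have := hz m; omega
    have harith := auxArith lam k j t f s hlo hl1 hj2 hjk htf hfs hcase
    have hkey := ((auxMain t ((lam - 1) * (s : ℝ)) ((lam - 1) * ((k : ℝ) + 1))
      harith).comp_tendsto hlog)
    set C : ℝ := αs ^ t * ∏ m ∈ Finset.univ.filter fun m : Fin j => ¬ q m = 0,
      b (q m - 1) with hC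
    refine (hkey.const_mul_left C).congr' ?_ EventuallyEq.rfl
    filter_upwards [hlog.eventually_gt_atTop 0] with n hx
    show C * ((Real.log (Real.log n) / Real.log n) ^ t
        * Real.log n ^ ((lam - 1) * (s : ℝ))) = ∏ m, a (q m) n
    rw [← Finset.prod_filter_mul_prod_filter_not Finset.univ (fun m => q m = 0)]
    have hz : ∏ m ∈ Finset.univ.filter fun m : Fin j => q m = 0, a (q m) n
        = e n ^ t := by
      rw [htdef, ← Finset.prod_const]
      refine Finset.prod_congr rfl fun m hm => ?_
      simp only [Finset.mem_filter] at hm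
      simp [ha, hm.2]
    have hnz : ∏ m ∈ Finset.univ.filter fun m : Fin j => ¬ q m = 0, a (q m) n
        = (∏ m ∈ Finset.univ.filter fun m : Fin j => ¬ q m = 0, b (q m - 1))
          * Real.log n ^ ((lam - 1) * (s : ℝ)) := by
      have hap : ∀ m ∈ Finset.univ.filter fun m : Fin j => ¬ q m = 0,
          a (q m) n = b (q m - 1) * Real.log n ^ ((lam - 1) * (q m : ℝ)) := by
        intro m hm
        simp only [Finset.mem_filter] at hm
        simp [ha, hm.2]
      rw [Finset.prod_congr rfl hap, Finset.prod_mul_distrib]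
      congr 1
      rw [← Real.rpow_sum_of_pos hx]
      congr 1
      rw [← Finset.mul_sum]
      congr 1
      rw [← Nat.cast_sum]
      congr 1
      rw [hsdef]
      exact_mod_cast Finset.sum_filter_ne_zero Finset.univ
    rw [hz, hnz, hC, he]
    have hee : (αs * Real.log (Real.log n) / Real.log n) ^ t
        = αs ^ t * (Real.log (Real.log n) / Real.log n) ^ t := by
      rw [mul_div_assoc, mul_pow]
    rw [hee]
    ring
  have hsum := Asymptotics.IsLittleO.sum hterm
  exact hsum.congr' (by filter_upwards [hmain] with n hn; rw [Finset.sum_apply]; exact hn.symm) Filter.EventuallyEq.rfl
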